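/- Let X and Y be locally compact Hausdorff spaces, let E and F be real Banach spaces, and let T : C₀(X,E) → C₀(Y,F) be a linear isometry. Let x ∈ X and let μ ∈ E* with ‖μ‖ = 1 be such that the set S_{x,μ} = {f ∈ C₀(X,E) : μ(f(x)) = ‖f‖ = 1} is nonempty. Then there exist y ∈ Y and ν ∈ F* with ‖ν‖ = 1 such that ν((Tf)(y)) = 1 for every f ∈ S_{x,μ}. -/

import Mathlib

open ZeroAtInfty Set Metric Filter

section helpers
variable {Y F G : Type*} [TopologicalSpace Y]
  [NormedAddCommGroup F] [NormedAddCommGroup G] [NormedSpace ℝ G]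

lemma c0_apply_le (f : C₀(Y, F)) (y : Y) : ‖f y‖ ≤ ‖f‖ := by
  rw [← ZeroAtInftyContinuousMap.norm_toBCF_eq_norm]
  exact BoundedContinuousFunction.norm_coe_le_norm f.toBCF y

lemma c0_norm_le (f : C₀(Y, F)) {C : ℝ} (hC : 0 ≤ C) (h : ∀ y, ‖f y‖ ≤ C) : ‖f‖ ≤ C := by
  rw [← ZeroAtInftyContinuousMap.norm_toBCF_eq_norm]
  exact (BoundedContinuousFunction.norm_le hC).2 h

lemma level_isCompact (g : C₀(Y, F)) {c : ℝ} (hc : 0 < c) :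
    IsCompact {y | c ≤ ‖g y‖} := by
  have ht : {y | g y ∈ ball (0 : F) c} ∈ cocompact Y :=
    (zero_at_infty g) (ball_mem_nhds 0 hc)
  obtain ⟨K, hK, hKc⟩ := mem_cocompact.mp ht
  have hsub : {y | c ≤ ‖g y‖} ⊆ K := by
    intro y hy
    by_contra hyK
    have := hKc hyK
    simp only [mem_setOf_eq, mem_ball, dist_zero_right] at this
    exact absurd hy (not_le.mpr this)
  have hcl : IsClosed {y | c ≤ ‖g y‖} :=
    isClosed_le continuous_const ((map_continuous g).norm)
  exact hK.of_isClosed_subset hcl hsub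

lemma exists_one_le_of_norm_one (g : C₀(Y, F)) (hg : ‖g‖ = 1) :
    ∃ y, 1 ≤ ‖g y‖ := by
  have hK : IsCompact {y | (1:ℝ)/2 ≤ ‖g y‖} := level_isCompact g (by norm_num)
  have hne : {y | (1:ℝ)/2 ≤ ‖g y‖}.Nonempty := by
    by_contra hempty
    rw [not_nonempty_iff_eq_empty] at hempty
    have : ‖g‖ ≤ 1/2 := by
      refine c0_norm_le g (by norm_num) fun y => ?_
      by_contra hy
      exact absurd (eq_empty_iff_forall_notMem.mp hempty y) (by simp [not_le.mp hy |>.le]; linarith [not_le.mp hy])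
    linarith [hg ▸ this]
  obtain ⟨y₀, hy₀, hmax⟩ := hK.exists_isMaxOn hne ((map_continuous g).norm.continuousOn)
  have hle : ∀ y, ‖g y‖ ≤ ‖g y₀‖ := by
    intro y
    by_cases hy : (1:ℝ)/2 ≤ ‖g y‖
    · exact hmax hy
    · have h₀ : (1:ℝ)/2 ≤ ‖g y₀‖ := hy₀
      linarith [not_le.mp hy]
  have h1 : ‖g‖ ≤ ‖g y₀‖ := c0_norm_le g (norm_nonneg _) hle
  exact ⟨y₀, by rw [← hg]; exact h1⟩

/-- A nonempty convex subset of the unit sphere admits a supporting unit functional. -/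
lemma exists_unit_dual_of_convex_sphere (C : Set G) (hC : Convex ℝ C)
    (hne : C.Nonempty) (hnorm : ∀ v ∈ C, ‖v‖ = 1) :
    ∃ ν : G →L[ℝ] ℝ, ‖ν‖ = 1 ∧ ∀ v ∈ C, ν v = 1 := by
  have hdisj : Disjoint (ball (0 : G) 1) C := by
    rw [Set.disjoint_left]
    intro v hv hvC
    rw [mem_ball, dist_zero_right] at hv
    exact absurd (hnorm v hvC) (by linarith)
  obtain ⟨f, u, hfu, hfC⟩ :=
    geometric_hahn_banach_open (convex_ball 0 1) isOpen_ball hC hdisj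
  have hu0 : 0 < u := by
    have := hfu 0 (mem_ball_self one_pos)
    simpa using this
  -- f ≤ u on the closed ball
  have hcb : ∀ a ∈ closedBall (0 : G) 1, f a ≤ u := by
    have hsub : closedBall (0 : G) 1 ⊆ {a | f a ≤ u} := by
      rw [← closure_ball (0 : G) one_ne_zero]
      exact closure_minimal (fun a ha => (hfu a ha).le)
        (isClosed_le f.continuous continuous_const)
    exact hsub
  have hnormf : ‖f‖ ≤ u := by
    refine ContinuousLinearMap.opNorm_le_of_unit_norm hu0.le fun a ha => ?_
    have h1 : f a ≤ u := hcb a (by simp [closedBall, dist_zero_right, ha.le])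
    have h2 : -(f a) ≤ u := by
      have := hcb (-a) (by simp [dist_zero_right, ha.le])
      simpa using this
    rw [Real.norm_eq_abs, abs_le]
    constructor <;> linarith
  obtain ⟨v₀, hv₀⟩ := hne
  have heq : ∀ v ∈ C, f v = u := by
    intro v hv
    have h1 : u ≤ f v := hfC v hv
    have h2 : f v ≤ ‖f‖ := by
      calc f v ≤ ‖f v‖ := le_abs_self _
        _ ≤ ‖f‖ * ‖v‖ := f.le_opNorm v
        _ = ‖f‖ := by rw [hnorm v hv, mul_one]
    linarith [hnormf]
  have hfeq : ‖f‖ = u := le_antisymm hnormf (by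
    calc u = f v₀ := (heq v₀ hv₀).symm
      _ ≤ ‖f v₀‖ := le_abs_self _
      _ ≤ ‖f‖ * ‖v₀‖ := f.le_opNorm v₀
      _ = ‖f‖ := by rw [hnorm v₀ hv₀, mul_one])
  refine ⟨u⁻¹ • f, ?_, fun v hv => ?_⟩
  · rw [norm_smul u⁻¹ f, hfeq, norm_inv, Real.norm_eq_abs, abs_of_pos hu0,
      inv_mul_cancel₀ hu0.ne']
  · simp only [ContinuousLinearMap.smul_apply, smul_eq_mul, heq v hv,
      inv_mul_cancel₀ hu0.ne']

end helpers

section evals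
variable {Y F : Type*} [TopologicalSpace Y] [NormedAddCommGroup F] [NormedSpace ℝ F]

/-- Evaluation at a point as a linear map on `C₀`. -/
def evalL (y : Y) : C₀(Y, F) →ₗ[ℝ] F where
  toFun g := g y
  map_add' f g := by simp
  map_smul' r f := by simp

@[simp] lemma evalL_apply (y : Y) (g : C₀(Y, F)) : evalL y g = g y := rfl

end evals

set_option maxHeartbeats 1600000

/-- If `T : C₀(X, E) → C₀(Y, F)` is a linear isometry and `S_{x,μ}` is nonempty for a
unit functional `μ ∈ E*`, then there are `y ∈ Y` and a unit functional `ν ∈ F*` such that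
`ν ((T f) y) = 1` for every `f ∈ S_{x,μ}`; i.e. the set `Q_{x,μ}` is nonempty. -/
theorem Q_nonempty {X Y E F : Type*}
    [TopologicalSpace X] [LocallyCompactSpace X] [T2Space X]
    [TopologicalSpace Y] [LocallyCompactSpace Y] [T2Space Y]
    [NormedAddCommGroup E] [NormedSpace ℝ E] [CompleteSpace E]
    [NormedAddCommGroup F] [NormedSpace ℝ F] [CompleteSpace F]
    (T : C₀(X, E) →ₗᵢ[ℝ] C₀(Y, F))
    (x : X) (μ : StrongDual ℝ E) (hμ : ‖μ‖ = 1)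
    (hS : ∃ f : C₀(X, E), μ (f x) = 1 ∧ ‖f‖ = 1) :
    ∃ (y : Y) (ν : StrongDual ℝ F), ‖ν‖ = 1 ∧
      ∀ f : C₀(X, E), μ (f x) = 1 → ‖f‖ = 1 → ν (T f y) = 1 := by
  classical
  obtain ⟨f₀, hf₀μ, hf₀n⟩ := hS
  set S : Set C₀(X, E) := {f | μ (f x) = 1 ∧ ‖f‖ = 1} with hSdef
  have hf₀S : f₀ ∈ S := ⟨hf₀μ, hf₀n⟩
  have hTnorm : ∀ f : C₀(X, E), ‖T f‖ = ‖f‖ := T.norm_map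
  -- lower bound on the norm from the functional μ
  have hlow : ∀ f : C₀(X, E), μ (f x) = 1 → 1 ≤ ‖f‖ := by
    intro f hf
    calc (1:ℝ) = μ (f x) := hf.symm
      _ ≤ ‖μ (f x)‖ := le_abs_self _
      _ ≤ ‖μ‖ * ‖f x‖ := μ.le_opNorm _
      _ = ‖f x‖ := by rw [hμ, one_mul]
      _ ≤ ‖f‖ := c0_apply_le f x
  -- averages of elements of S stay in S
  have hmemS : ∀ v : Finset C₀(X, E), v.Nonempty → (∀ f ∈ v, f ∈ S) →
      ((v.card : ℝ)⁻¹ • ∑ f ∈ v, f) ∈ S := by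
    intro v hvne hv
    have hcard : (0:ℝ) < v.card := by exact_mod_cast Finset.card_pos.mpr hvne
    have hμval : μ (((v.card : ℝ)⁻¹ • ∑ f ∈ v, f) x) = 1 := by
      have h1 : ((v.card : ℝ)⁻¹ • ∑ f ∈ v, f) x
          = (v.card : ℝ)⁻¹ • (evalL x) (∑ f ∈ v, f) := rfl
      rw [h1, map_sum, map_smul, map_sum]
      have : ∀ f ∈ v, μ ((evalL x) f) = 1 := fun f hf => (hv f hf).1
      rw [Finset.sum_congr rfl this]
      simp [inv_mul_cancel₀ hcard.ne']
    refine ⟨hμval, le_antisymm ?_ (hlow _ hμval)⟩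
    calc ‖(v.card : ℝ)⁻¹ • ∑ f ∈ v, f‖ = (v.card : ℝ)⁻¹ * ‖∑ f ∈ v, f‖ := by
          rw [norm_smul, norm_inv, Real.norm_natCast]
      _ ≤ (v.card : ℝ)⁻¹ * ∑ f ∈ v, ‖f‖ :=
          mul_le_mul_of_nonneg_left (norm_sum_le v _) (by positivity)
      _ = 1 := by
          rw [Finset.sum_congr rfl fun f hf => (hv f hf).2]
          simp [inv_mul_cancel₀ hcard.ne']
  -- the compact level sets
  set A : C₀(X, E) → Set Y := fun f => {y | 1 ≤ ‖T f y‖} with hAdef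
  have hAcompact : ∀ f : C₀(X, E), IsCompact (A f) := fun f => level_isCompact (T f) one_pos
  have hAclosed : ∀ f : C₀(X, E), IsClosed (A f) := fun f =>
    isClosed_le continuous_const ((map_continuous (T f)).norm)
  -- finite intersection property
  have hFIP : ∀ u : Finset ↥S, (A f₀ ∩ ⋂ i ∈ u, A i.1).Nonempty := by
    intro u
    set v : Finset C₀(X, E) := insert f₀ (u.image Subtype.val) with hvdef
    have hvS : ∀ f ∈ v, f ∈ S := by
      intro f hf
      rcases Finset.mem_insert.mp hf with h | h
      · exact h ▸ hf₀S
      · obtain ⟨i, _, hi⟩ := Finset.mem_image.mp h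
        exact hi ▸ i.2
    have hvne : v.Nonempty := ⟨f₀, Finset.mem_insert_self _ _⟩
    have hcard : (0:ℝ) < v.card := by exact_mod_cast Finset.card_pos.mpr hvne
    set h : C₀(X, E) := (v.card : ℝ)⁻¹ • ∑ f ∈ v, f with hhdef
    have hhS : h ∈ S := hmemS v hvne hvS
    obtain ⟨y, hy1⟩ := exists_one_le_of_norm_one (T h) (by rw [hTnorm]; exact hhS.2)
    have hne0 : T h y ≠ 0 := by
      intro h0; rw [h0, norm_zero] at hy1; linarith
    obtain ⟨ν₀, hν₀n, hν₀⟩ := exists_dual_vector ℝ (T h y) (norm_ne_zero_iff.mpr hne0)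
    have hThy : ‖T h y‖ = 1 := le_antisymm
      (by calc ‖T h y‖ ≤ ‖T h‖ := c0_apply_le (T h) y
            _ = 1 := by rw [hTnorm]; exact hhS.2) hy1
    have hval : ν₀ (T h y) = 1 := by rw [hν₀, hThy]; norm_num
    -- decompose ν₀ (T h y) as an average
    have hdecomp : (v.card : ℝ)⁻¹ * ∑ f ∈ v, ν₀ (T f y) = 1 := by
      have h1 : T h y = (v.card : ℝ)⁻¹ • ∑ f ∈ v, T f y := by
        have : T h = (v.card : ℝ)⁻¹ • ∑ f ∈ v, T f := by
          rw [hhdef, T.map_smul]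
          congr 1
          exact map_sum T (fun f => f) v
        rw [this]
        have h2 : ((v.card : ℝ)⁻¹ • ∑ f ∈ v, T f) y
            = (v.card : ℝ)⁻¹ • (evalL y) (∑ f ∈ v, T f) := rfl
        rw [h2, map_sum]
        rfl
      rw [h1, map_smul, map_sum] at hval
      simpa [smul_eq_mul] using hval
    have hle1 : ∀ f ∈ v, ν₀ (T f y) ≤ 1 := by
      intro f hf
      calc ν₀ (T f y) ≤ ‖ν₀ (T f y)‖ := le_abs_self _
        _ ≤ ‖ν₀‖ * ‖T f y‖ := ν₀.le_opNorm _
        _ = ‖T f y‖ := by rw [hν₀n, one_mul]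
        _ ≤ ‖T f‖ := c0_apply_le (T f) y
        _ = 1 := by rw [hTnorm]; exact (hvS f hf).2
    have heach : ∀ f ∈ v, ν₀ (T f y) = 1 := by
      by_contra hcon
      push_neg at hcon
      obtain ⟨f, hf, hfne⟩ := hcon
      have hlt : ν₀ (T f y) < 1 := lt_of_le_of_ne (hle1 f hf) hfne
      have hsum : ∑ f ∈ v, ν₀ (T f y) < ∑ _f ∈ v, (1:ℝ) :=
        Finset.sum_lt_sum hle1 ⟨f, hf, hlt⟩
      rw [Finset.sum_const, nsmul_eq_mul, mul_one] at hsum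
      have : (v.card : ℝ)⁻¹ * ∑ f ∈ v, ν₀ (T f y) < (v.card : ℝ)⁻¹ * v.card :=
        mul_lt_mul_of_pos_left hsum (by positivity)
      rw [hdecomp, inv_mul_cancel₀ hcard.ne'] at this
      exact lt_irrefl _ this
    have hmem : ∀ f ∈ v, y ∈ A f := by
      intro f hf
      show 1 ≤ ‖T f y‖
      calc (1:ℝ) = ν₀ (T f y) := (heach f hf).symm
        _ ≤ ‖ν₀ (T f y)‖ := le_abs_self _
        _ ≤ ‖ν₀‖ * ‖T f y‖ := ν₀.le_opNorm _
        _ = ‖T f y‖ := by rw [hν₀n, one_mul]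
    refine ⟨y, hmem f₀ (Finset.mem_insert_self _ _), ?_⟩
    rw [Set.mem_iInter₂]
    intro i hi
    exact hmem i.1 (Finset.mem_insert_of_mem (Finset.mem_image_of_mem _ hi))
  -- get a common point y
  obtain ⟨y, hyf₀, hyi⟩ := (hAcompact f₀).inter_iInter_nonempty
    (fun i : ↥S => A i.1) (fun i => hAclosed i.1) hFIP
  have hall : ∀ f ∈ S, ‖T f y‖ = 1 := by
    intro f hf
    have h1 : 1 ≤ ‖T f y‖ := Set.mem_iInter.mp hyi ⟨f, hf⟩
    have h2 : ‖T f y‖ ≤ 1 := by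
      calc ‖T f y‖ ≤ ‖T f‖ := c0_apply_le (T f) y
        _ = 1 := by rw [hTnorm]; exact hf.2
    linarith
  -- the convex set of values at y
  have hSconv : Convex ℝ S := by
    intro f hf g hg a b ha hb hab
    have hμval : μ ((a • f + b • g) x) = 1 := by
      have : (a • f + b • g) x = (evalL x) (a • f + b • g) := rfl
      rw [this, map_add, map_smul, map_smul, map_add]
      simp only [evalL_apply, map_smul, smul_eq_mul]
      rw [hf.1, hg.1]; ring_nf; linarith [hab]
    refine ⟨hμval, le_antisymm ?_ (hlow _ hμval)⟩
    calc ‖a • f + b • g‖ ≤ ‖a • f‖ + ‖b • g‖ := norm_add_le _ _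
      _ = a * ‖f‖ + b * ‖g‖ := by
          rw [norm_smul, norm_smul, Real.norm_eq_abs, Real.norm_eq_abs,
            abs_of_nonneg ha, abs_of_nonneg hb]
      _ = 1 := by rw [hf.2, hg.2]; ring_nf; linarith [hab]
  set L : C₀(X, E) →ₗ[ℝ] F := (evalL y).comp T.toLinearMap with hLdef
  have hCconv : Convex ℝ (L '' S) := hSconv.linear_image L
  have hCne : (L '' S).Nonempty := ⟨L f₀, f₀, hf₀S, rfl⟩
  have hCnorm : ∀ w ∈ L '' S, ‖w‖ = 1 := by
    rintro w ⟨f, hf, rfl⟩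
    exact hall f hf
  obtain ⟨ν, hνn, hν⟩ := exists_unit_dual_of_convex_sphere (L '' S) hCconv hCne hCnorm
  exact ⟨y, ν, hνn, fun f h1 h2 => hν (T f y) ⟨f, ⟨h1, h2⟩, rfl⟩⟩
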